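/- [ℛTxtTdCIndEx_C]_REC ⊊ [TxtTdCIndEx_C]_REC; that is, every class of recursive languages CIndEx_C-learnable by a total computable transductive learner is CIndEx_C-learnable by a partial computable transductive learner, and there exists a class of recursive languages CIndEx_C-learnable by a partial computable transductive learner but by no total computable transductive learner. -/

import Mathlib

namespace InductiveInference

/-- `φ_e` : the `e`-th partial computable function, via the standard numbering
of `Nat.Partrec.Code`. -/
def phi (e : ℕ) : ℕ →. ℕ := (Denumerable.ofNat Nat.Partrec.Code e).eval

/-- `W_e` : the domain of `φ_e`. -/
def Wset (e : ℕ) : Set ℕ := (phi e).Dom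

/-- `e` is a C-index: `φ_e` is total with values in `{0,1}`. -/
def CIndex (e : ℕ) : Prop := ∀ x, phi e x = Part.some 0 ∨ phi e x = Part.some 1

/-- `C_e = {x | φ_e x = 1}`. -/
def Cset (e : ℕ) : Set ℕ := {x | phi e x = Part.some 1}

/-- A language is recursive (decidable). -/
def RecLang (L : Set ℕ) : Prop := ∃ f : ℕ → Bool, Computable f ∧ ∀ x, x ∈ L ↔ f x = true

/-- Texts: total functions `ℕ → ℕ ∪ {#}`; `none` is the pause symbol `#`. -/
abbrev Text := ℕ → Option ℕ

/-- The content of a text: its range minus the pause symbol. -/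
def content (T : Text) : Set ℕ := {x | ∃ n, T n = some x}

/-- The initial segment `T[n] = (T 0, …, T (n-1))`. -/
def initSeg (T : Text) (n : ℕ) : List (Option ℕ) := (List.range n).map T

/-- The (finite) content of the initial segment `T[n]`. -/
def fincontent (T : Text) (n : ℕ) : Finset ℕ := ((initSeg T n).filterMap id).toFinset

/-- A canonical numerical code for a finite set of naturals. -/
def setCode (D : Finset ℕ) : ℕ := Encodable.encode (D.sort (· ≤ ·))

/-- Learners: partial functions on (suitably coded) natural number inputs. -/
abbrev Learner := ℕ →. ℕ

/-- The learner is partial computable. -/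
def PartComputable (h : Learner) : Prop := Nat.Partrec h

/-- The learner is total computable. -/
def TotalComputable (h : Learner) : Prop := Nat.Partrec h ∧ ∀ x, (h x).Dom

/-- Hypothesis sequences (possibly undefined at some points). -/
abbrev HypSeq := ℕ → Part ℕ

/-- Gold-style (full-information) learning: `G(h,T)(i) = h(T[i])`. -/
def Gop (h : Learner) (T : Text) (i : ℕ) : Part ℕ :=
  h (Encodable.encode (initSeg T i))

/-- Partially set-driven learning: `Psd(h,T)(i) = h(content T[i], i)`. -/
def Psdop (h : Learner) (T : Text) (i : ℕ) : Part ℕ :=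
  h (Nat.pair (setCode (fincontent T i)) i)

/-- Set-driven learning: `Sd(h,T)(i) = h(content T[i])`. -/
def Sdop (h : Learner) (T : Text) (i : ℕ) : Part ℕ :=
  h (setCode (fincontent T i))

/-- Iterative learning: the input `none` codes the empty start sequence `ε`,
and `some (e, x)` codes the pair of previous hypothesis `e` and datum `x`. -/
def Itop (h : Learner) (T : Text) : ℕ → Part ℕ
  | 0 => h (Encodable.encode (none : Option (ℕ × Option ℕ)))
  | i + 1 => (Itop h T i).bind fun e =>
      h (Encodable.encode (some (e, T i) : Option (ℕ × Option ℕ)))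

/-- Transductive learning: the learner receives the single (coded) datum
`T i`; the output `0` codes the distinguished symbol `?`, and the output
`e + 1` codes the hypothesis `e`.  The value `?` of the hypothesis sequence
is represented by `Part.none`. -/
def Tdop (h : Learner) (T : Text) : ℕ → Part ℕ
  | 0 => Part.none
  | i + 1 => (h (Encodable.encode (T i))).bind fun v =>
      match v with
      | 0 => Tdop h T i
      | e + 1 => Part.some e

/-- `Ex_C`: syntactic convergence to a single correct C-index. -/
def ExC (p : HypSeq) (T : Text) : Prop :=
  ∃ n₀, (∀ n, n₀ ≤ n → p n = p n₀) ∧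
    ∃ e, p n₀ = Part.some e ∧ CIndex e ∧ Cset e = content T

/-- `Ex_W`: syntactic convergence to a single correct W-index. -/
def ExW (p : HypSeq) (T : Text) : Prop :=
  ∃ n₀, (∀ n, n₀ ≤ n → p n = p n₀) ∧
    ∃ e, p n₀ = Part.some e ∧ Wset e = content T

/-- `Bc_C`: semantic convergence to correct C-indices. -/
def BcC (p : HypSeq) (T : Text) : Prop :=
  ∃ n₀, ∀ n, n₀ ≤ n → ∃ e, p n = Part.some e ∧ CIndex e ∧ Cset e = content T

/-- `Bc_W`: semantic convergence to correct W-indices. -/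
def BcW (p : HypSeq) (T : Text) : Prop :=
  ∃ n₀, ∀ n, n₀ ≤ n → ∃ e, p n = Part.some e ∧ Wset e = content T

/-- `CInd`: every hypothesis output is a C-index. -/
def CIndRes (p : HypSeq) (_T : Text) : Prop :=
  ∀ i e, p i = Part.some e → CIndex e

/-- `T`: the always-true restriction. -/
def TrueRes (_p : HypSeq) (_T : Text) : Prop := True

abbrev InteractionOp := Learner → Text → HypSeq
abbrev Restriction := HypSeq → Text → Prop

/-- Conjunction of restrictions. -/
def andRes (δ δ' : Restriction) : Restriction := fun p T => δ p T ∧ δ' p T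

/-- `h` `Txtβδ`-learns `L`: on every text for `L` the restriction `δ` holds. -/
def Learns (β : InteractionOp) (δ : Restriction) (h : Learner) (L : Set ℕ) : Prop :=
  ∀ T : Text, content T = L → δ (β h T) T

/-- The restriction `α` holds for `h` on all texts whatsoever. -/
def OnAllTexts (β : InteractionOp) (α : Restriction) (h : Learner) : Prop :=
  ∀ T : Text, α (β h T) T

/-- A class of recursive languages. -/
def IsRecClass (ℒ : Set (Set ℕ)) : Prop := ∀ L ∈ ℒ, RecLang L

/-- `[𝒞Txtβδ]_REC`: classes of recursive languages learnable by some
learner from `C` under interaction operator `β` and restriction `δ`. -/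
def LearnableREC (C : Learner → Prop) (β : InteractionOp) (δ : Restriction) :
    Set (Set (Set ℕ)) :=
  {ℒ | IsRecClass ℒ ∧ ∃ h, C h ∧ ∀ L ∈ ℒ, Learns β δ h L}

/-- `[τ(α)𝒞Txtβδ]_REC`: as above, where additionally `α` must hold on
arbitrary texts. -/
def TauLearnableREC (C : Learner → Prop) (α : Restriction) (β : InteractionOp)
    (δ : Restriction) : Set (Set (Set ℕ)) :=
  {ℒ | IsRecClass ℒ ∧ ∃ h, C h ∧ OnAllTexts β α h ∧ ∀ L ∈ ℒ, Learns β δ h L}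

/-! ### Auxiliary development for the separation -/

section Separation

open Nat.Partrec (Code)
open Nat.Partrec.Code

/-- Structured data points `⟨e, i, j⟩`. -/
def dat (e i j : ℕ) : ℕ := Nat.pair e (Nat.pair i j)

lemma dat_inj {e i j e' i' j' : ℕ} (h : dat e i j = dat e' i' j') :
    e = e' ∧ i = i' ∧ j = j' := by
  unfold dat at h
  rw [Nat.pair_eq_pair] at h
  rcases h with ⟨h1, h2⟩
  rw [Nat.pair_eq_pair] at h2
  exact ⟨h1, h2⟩

/-- Characteristic function (on coded input) used to produce C-indices for
one- and two-element sets. -/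
def pairCharB (m : ℕ) : ℕ :=
  if m.unpair.2 = m.unpair.1.unpair.1 ∨ m.unpair.2 = m.unpair.1.unpair.2 then 1 else 0

lemma pairCharB_primrec : Primrec pairCharB :=
  Primrec.ite
    (PrimrecPred.or
      (Primrec.eq.comp (Primrec.snd.comp Primrec.unpair)
        (Primrec.fst.comp (Primrec.unpair.comp (Primrec.fst.comp Primrec.unpair))))
      (Primrec.eq.comp (Primrec.snd.comp Primrec.unpair)
        (Primrec.snd.comp (Primrec.unpair.comp (Primrec.fst.comp Primrec.unpair)))))
    (Primrec.const 1) (Primrec.const 0)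

lemma pairChar_partrec : Nat.Partrec (fun m => Part.some (pairCharB m) : ℕ →. ℕ) :=
  Partrec.nat_iff.1 pairCharB_primrec.to_comp.partrec

/-- A code for `pairCharB`. -/
noncomputable def cF : Code := (exists_code.1 pairChar_partrec).choose

lemma cF_spec (m : ℕ) : Code.eval cF m = Part.some (pairCharB m) :=
  congrFun (exists_code.1 pairChar_partrec).choose_spec m

/-- A canonical C-index for the set `{u, v}`. -/
noncomputable def pIdx (u v : ℕ) : ℕ := Encodable.encode (Code.curry cF (Nat.pair u v))

lemma phi_pIdx (u v x : ℕ) :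
    phi (pIdx u v) x = Part.some (if x = u ∨ x = v then 1 else 0) := by
  show Code.eval (Denumerable.ofNat Code (Encodable.encode (Code.curry cF (Nat.pair u v)))) x = _
  rw [Denumerable.ofNat_encode, Code.eval_curry, cF_spec]
  unfold pairCharB
  simp [Nat.unpair_pair]

lemma pIdx_cindex (u v : ℕ) : CIndex (pIdx u v) := by
  intro x
  rw [phi_pIdx]
  by_cases h : x = u ∨ x = v
  · right; rw [if_pos h]
  · left; rw [if_neg h]

lemma pIdx_cset (u v : ℕ) : Cset (pIdx u v) = {u, v} := by
  ext x
  simp only [Cset, Set.mem_setOf_eq, phi_pIdx, Set.mem_insert_iff, Set.mem_singleton_iff,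
    Part.some_inj]
  by_cases h : x = u ∨ x = v
  · simp [h]
  · simp [h]

lemma pIdx_cset_single (u : ℕ) : Cset (pIdx u u) = {u} := by
  rw [pIdx_cset, Set.pair_eq_singleton]

/-- The probe value of a (potential) learner code `e`. -/
def probe (e : ℕ) : Part ℕ := phi e (dat e 0 0 + 1)

/-- A single dovetailing step of the search for a halting of `φ_c` on row 1. -/
def stest (e c n : ℕ) : Option ℕ :=
  Code.evaln n.unpair.2 (Denumerable.ofNat Code c) (dat e 1 n.unpair.1)

/-- Dovetailing search for a halting of `φ_c` on row-1 data of column `e`. -/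
def srch (e c : ℕ) : Part ℕ := Nat.rfind fun n => Part.some (stest e c n).isSome

/-- The value found by the search. -/
def sval (e c n : ℕ) : ℕ := (stest e c n).getD 0

lemma srch_found {e c m : ℕ} (h : srch e c = Part.some m) :
    phi c (dat e 1 m.unpair.1) = Part.some (sval e c m) := by
  have hm : m ∈ Nat.rfind fun n => Part.some (stest e c n).isSome :=
    Part.eq_some_iff.1 h
  have hspec := Nat.rfind_spec hm
  rw [Part.mem_some_iff] at hspec
  obtain ⟨w, hw⟩ := Option.isSome_iff_exists.1 hspec.symm
  have hval : sval e c m = w := by rw [sval, hw]; rfl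
  have : w ∈ Code.eval (Denumerable.ofNat Code c) (dat e 1 m.unpair.1) :=
    Code.evaln_sound (by rw [← stest]; exact hw ▸ rfl)
  rw [hval]
  exact Part.eq_some_iff.2 this

lemma srch_dom_of_cindex {e c : ℕ} (h : CIndex c) : (srch e c).Dom := by
  have h0 := h (dat e 1 0)
  have hex : ∃ w, phi c (dat e 1 0) = Part.some w := by
    rcases h0 with h' | h'
    exacts [⟨0, h'⟩, ⟨1, h'⟩]
  obtain ⟨w, hw⟩ := hex
  have hw' : w ∈ Code.eval (Denumerable.ofNat Code c) (dat e 1 0) := Part.eq_some_iff.1 hw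
  obtain ⟨k, hk⟩ := Code.evaln_complete.1 hw'
  rw [srch]; refine Nat.rfind_dom.2 ?_
  refine ⟨Nat.pair 0 k, ?_, fun {_} _ => trivial⟩
  rw [Part.mem_some_iff]
  have hst : stest e c (Nat.pair 0 k) =
      Code.evaln k (Denumerable.ofNat Code c) (dat e 1 0) := by
    unfold stest
    rw [Nat.unpair_pair]
  rw [hst]
  exact (Option.isSome_iff_exists.2 ⟨w, hk⟩).symm

open Classical in
/-- The second element of the diagonal language for column `e`. -/
noncomputable def Lsnd (e : ℕ) : ℕ :=
  if h : (probe e).Dom then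
    let c := (probe e).get h - 1
    if hs : (srch e c).Dom then
      if sval e c ((srch e c).get hs) = 1 then dat e 1 (((srch e c).get hs).unpair.1 + 1)
      else dat e 1 ((srch e c).get hs).unpair.1
    else dat e 2 0
  else 0

open Classical in
/-- The diagonal language for column `e`. -/
noncomputable def Lset (e : ℕ) : Set ℕ :=
  if h : (probe e).Dom then
    if (probe e).get h = 0 then {dat e 0 0} else {dat e 0 0, Lsnd e}
  else ∅

lemma Lset_singleton {e : ℕ} (h : probe e = Part.some 0) : Lset e = {dat e 0 0} := by
  simp [Lset, h]

lemma Lset_pair {e c : ℕ} (h : probe e = Part.some (c + 1)) :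
    Lset e = {dat e 0 0, Lsnd e} := by
  simp [Lset, h]

lemma Lsnd_found_one {e c m : ℕ} (h : probe e = Part.some (c + 1))
    (hs : srch e c = Part.some m) (hv : sval e c m = 1) :
    Lsnd e = dat e 1 (m.unpair.1 + 1) := by
  simp [Lsnd, h, hs, hv]

lemma Lsnd_found_ne {e c m : ℕ} (h : probe e = Part.some (c + 1))
    (hs : srch e c = Part.some m) (hv : ¬ sval e c m = 1) :
    Lsnd e = dat e 1 m.unpair.1 := by
  simp [Lsnd, h, hs, hv]

lemma Lsnd_unfound {e c : ℕ} (h : probe e = Part.some (c + 1))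
    (hs : ¬ (srch e c).Dom) : Lsnd e = dat e 2 0 := by
  simp [Lsnd, h, hs]

/-- The body of the partial learner (on the code of an actual datum). -/
noncomputable def gbody (x : ℕ) : Part ℕ :=
  if x.unpair.2.unpair.1 = 0 then
    (probe x.unpair.1).map fun α => if α = 0 then pIdx x x + 1 else 0
  else if x.unpair.2.unpair.1 = 1 then
    (probe x.unpair.1).bind fun α =>
      if α = 0 then Part.some 0
      else (srch x.unpair.1 (α - 1)).map fun m =>
        if (sval x.unpair.1 (α - 1) m = 1 ∧ x.unpair.2.unpair.2 = m.unpair.1 + 1) ∨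
           (¬ sval x.unpair.1 (α - 1) m = 1 ∧ x.unpair.2.unpair.2 = m.unpair.1) then
          pIdx (dat x.unpair.1 0 0) x + 1
        else 0
  else if x.unpair.2.unpair.1 = 2 ∧ x.unpair.2.unpair.2 = 0 then
    (probe x.unpair.1).map fun α => if α = 0 then 0 else pIdx (dat x.unpair.1 0 0) x + 1
  else Part.some 0

/-- The partial transductive learner. -/
noncomputable def glearn : Learner := fun z => if z = 0 then Part.some 0 else gbody (z - 1)

lemma glearn_pause : glearn 0 = Part.some 0 := by simp [glearn]

lemma glearn_row0 {e : ℕ} (j : ℕ) {α : ℕ} (h : probe e = Part.some α) :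
    glearn (dat e 0 j + 1) =
      Part.some (if α = 0 then pIdx (dat e 0 j) (dat e 0 j) + 1 else 0) := by
  simp [glearn, gbody, dat, Nat.unpair_pair, h]

lemma glearn_row1 {e c : ℕ} (j : ℕ) (h : probe e = Part.some (c + 1)) {m : ℕ}
    (hs : srch e c = Part.some m) :
    glearn (dat e 1 j + 1) =
      Part.some (if (sval e c m = 1 ∧ j = m.unpair.1 + 1) ∨
          (¬ sval e c m = 1 ∧ j = m.unpair.1) then
        pIdx (dat e 0 0) (dat e 1 j) + 1 else 0) := by
  simp [glearn, gbody, dat, Nat.unpair_pair, h, hs]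

lemma glearn_row2 {e α : ℕ} (h : probe e = Part.some α) :
    glearn (dat e 2 0 + 1) =
      Part.some (if α = 0 then 0 else pIdx (dat e 0 0) (dat e 2 0) + 1) := by
  simp [glearn, gbody, dat, Nat.unpair_pair, h]

section PartrecHelpers

variable {α σ : Type*} [Primcodable α] [Primcodable σ]

lemma partrec_ite' {c : α → Prop} [DecidablePred c] {f g : α →. σ}
    (hc : Computable fun a => decide (c a)) (hf : Partrec f) (hg : Partrec g) :
    Partrec fun a => if c a then f a else g a :=
  (Partrec.cond hc hf hg).of_eq fun a => by by_cases h : c a <;> simp [h]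

lemma computable_ite' {c : α → Prop} [DecidablePred c] {f g : α → σ}
    (hc : Computable fun a => decide (c a)) (hf : Computable f) (hg : Computable g) :
    Computable fun a => if c a then f a else g a :=
  (Computable.cond hc hf hg).of_eq fun a => by by_cases h : c a <;> simp [h]

end PartrecHelpers

theorem glearn_partrec : Nat.Partrec glearn := by
  -- basic primitive recursive pieces
  have hu : Primrec Nat.unpair := Primrec.unpair
  have hu1 : Primrec fun x : ℕ => x.unpair.1 := Primrec.fst.comp hu
  have hu2 : Primrec fun x : ℕ => x.unpair.2 := Primrec.snd.comp hu
  have hu21 : Primrec fun x : ℕ => x.unpair.2.unpair.1 := Primrec.fst.comp (hu.comp hu2)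
  have hu22 : Primrec fun x : ℕ => x.unpair.2.unpair.2 := Primrec.snd.comp (hu.comp hu2)
  have hpidx : Primrec₂ pIdx :=
    Primrec.encode.comp
      (Code.primrec₂_curry.comp (Primrec.const cF) (Primrec₂.natPair.comp Primrec.fst Primrec.snd))
  -- `probe` is partial computable
  have hprobe : Partrec probe := by
    have h1 : Computable fun e : ℕ => Denumerable.ofNat Code e := Computable.ofNat Code
    have h2 : Computable fun e : ℕ => dat e 0 0 + 1 :=
      (Primrec.succ.comp (Primrec₂.natPair.comp Primrec.id
        (Primrec.const (Nat.pair 0 0)))).to_comp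
    exact Code.eval_part.comp h1 h2
  -- `stest` is primitive recursive
  have hstest : Primrec fun p : ℕ × ℕ × ℕ => stest p.1 p.2.1 p.2.2 := by
    have h221 : Primrec fun p : ℕ × ℕ × ℕ => p.2.2 := Primrec.snd.comp Primrec.snd
    have harg : Primrec fun p : ℕ × ℕ × ℕ =>
        ((p.2.2.unpair.2, Denumerable.ofNat Code p.2.1), dat p.1 1 p.2.2.unpair.1) :=
      ((Primrec.snd.comp (hu.comp h221)).pair
          ((Primrec.ofNat Code).comp (Primrec.fst.comp Primrec.snd))).pair
        (Primrec₂.natPair.comp Primrec.fst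
          (Primrec₂.natPair.comp (Primrec.const 1) (Primrec.fst.comp (hu.comp h221))))
    exact Code.primrec_evaln.comp harg
  -- `srch` is partial computable
  have hsrch : Partrec₂ srch := by
    have hp : Computable₂ fun p : ℕ × ℕ => fun n : ℕ => (stest p.1 p.2 n).isSome := by
      have : Primrec fun q : (ℕ × ℕ) × ℕ => (stest q.1.1 q.1.2 q.2).isSome :=
        Primrec.option_isSome.comp
          (hstest.comp ((Primrec.fst.comp Primrec.fst).pair
            ((Primrec.snd.comp Primrec.fst).pair Primrec.snd)))
      exact this.to_comp
    exact Partrec.rfind hp.partrec₂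
  -- `sval` is primitive recursive
  have hsval : Primrec fun p : ℕ × ℕ × ℕ => sval p.1 p.2.1 p.2.2 :=
    Primrec.option_getD.comp hstest (Primrec.const 0)
  -- branch for row 0
  have hbr0 : Partrec fun x : ℕ =>
      (probe x.unpair.1).map fun α => if α = 0 then pIdx x x + 1 else 0 := by
    refine Partrec.map (hprobe.comp hu1.to_comp) ?_
    have : Primrec fun p : ℕ × ℕ => if p.2 = 0 then pIdx p.1 p.1 + 1 else 0 :=
      Primrec.ite (Primrec.eq.comp Primrec.snd (Primrec.const 0))
        (Primrec.succ.comp (hpidx.comp Primrec.fst Primrec.fst)) (Primrec.const 0)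
    exact this.to_comp
  -- branch for row 1
  have hbr1 : Partrec fun x : ℕ =>
      (probe x.unpair.1).bind fun α =>
        if α = 0 then Part.some 0
        else (srch x.unpair.1 (α - 1)).map fun m =>
          if (sval x.unpair.1 (α - 1) m = 1 ∧ x.unpair.2.unpair.2 = m.unpair.1 + 1) ∨
             (¬ sval x.unpair.1 (α - 1) m = 1 ∧ x.unpair.2.unpair.2 = m.unpair.1) then
            pIdx (dat x.unpair.1 0 0) x + 1
          else 0 := by
    refine Partrec.bind (hprobe.comp hu1.to_comp) ?_
    refine partrec_ite' ?_ ?_ ?_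
    · exact (Primrec.eq.comp Primrec.snd (Primrec.const 0)).decide.to_comp
    · exact Partrec.const' (Part.some 0)
    · refine Partrec.map
        (hsrch.comp ((hu1.comp Primrec.fst).to_comp)
          ((Primrec.pred.comp Primrec.snd).to_comp)) ?_
      -- the inner pure function of `q : (ℕ × ℕ) × ℕ` (i.e. `((x, α), m)`)
      have hx : Primrec fun q : (ℕ × ℕ) × ℕ => q.1.1 := Primrec.fst.comp Primrec.fst
      have hal : Primrec fun q : (ℕ × ℕ) × ℕ => q.1.2 := Primrec.snd.comp Primrec.fst
      have hm : Primrec fun q : (ℕ × ℕ) × ℕ => q.2 := Primrec.snd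
      have hsv : Primrec fun q : (ℕ × ℕ) × ℕ => sval q.1.1.unpair.1 (q.1.2 - 1) q.2 :=
        hsval.comp ((hu1.comp hx).pair ((Primrec.pred.comp hal).pair hm))
      have hj : Primrec fun q : (ℕ × ℕ) × ℕ => q.1.1.unpair.2.unpair.2 := hu22.comp hx
      have hm1 : Primrec fun q : (ℕ × ℕ) × ℕ => q.2.unpair.1 := Primrec.fst.comp (hu.comp hm)
      have hc1 : PrimrecPred fun q : (ℕ × ℕ) × ℕ => sval q.1.1.unpair.1 (q.1.2 - 1) q.2 = 1 :=
        Primrec.eq.comp hsv (Primrec.const 1)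
      have hc2 : PrimrecPred fun q : (ℕ × ℕ) × ℕ =>
          q.1.1.unpair.2.unpair.2 = q.2.unpair.1 + 1 :=
        Primrec.eq.comp hj (Primrec.succ.comp hm1)
      have hc3 : PrimrecPred fun q : (ℕ × ℕ) × ℕ => q.1.1.unpair.2.unpair.2 = q.2.unpair.1 :=
        Primrec.eq.comp hj hm1
      have hcond : PrimrecPred fun q : (ℕ × ℕ) × ℕ =>
          (sval q.1.1.unpair.1 (q.1.2 - 1) q.2 = 1 ∧
            q.1.1.unpair.2.unpair.2 = q.2.unpair.1 + 1) ∨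
          (¬ sval q.1.1.unpair.1 (q.1.2 - 1) q.2 = 1 ∧
            q.1.1.unpair.2.unpair.2 = q.2.unpair.1) :=
        PrimrecPred.or (hc1.and hc2) ((hc1.not).and hc3)
      have hval : Primrec fun q : (ℕ × ℕ) × ℕ => pIdx (dat q.1.1.unpair.1 0 0) q.1.1 + 1 :=
        Primrec.succ.comp (hpidx.comp
          (Primrec₂.natPair.comp (hu1.comp hx) (Primrec.const (Nat.pair 0 0))) hx)
      exact (Primrec.ite hcond hval (Primrec.const 0)).to_comp
  -- branch for row 2
  have hbr2 : Partrec fun x : ℕ =>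
      (probe x.unpair.1).map fun α =>
        if α = 0 then 0 else pIdx (dat x.unpair.1 0 0) x + 1 := by
    refine Partrec.map (hprobe.comp hu1.to_comp) ?_
    have : Primrec fun p : ℕ × ℕ =>
        if p.2 = 0 then 0 else pIdx (dat p.1.unpair.1 0 0) p.1 + 1 :=
      Primrec.ite (Primrec.eq.comp Primrec.snd (Primrec.const 0)) (Primrec.const 0)
        (Primrec.succ.comp (hpidx.comp
          (Primrec₂.natPair.comp (hu1.comp Primrec.fst) (Primrec.const (Nat.pair 0 0)))
          Primrec.fst))
    exact this.to_comp
  have hgbody : Partrec gbody := by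
    refine partrec_ite' (Primrec.eq.comp hu21 (Primrec.const 0)).decide.to_comp hbr0 ?_
    refine partrec_ite' (Primrec.eq.comp hu21 (Primrec.const 1)).decide.to_comp hbr1 ?_
    refine partrec_ite' ?_ hbr2 (Partrec.const' (Part.some 0))
    exact ((Primrec.eq.comp hu21 (Primrec.const 2)).and
      (Primrec.eq.comp hu22 (Primrec.const 0))).decide.to_comp
  have : Partrec glearn :=
    partrec_ite' (Primrec.eq.comp Primrec.id (Primrec.const 0)).decide.to_comp
      (Partrec.const' (Part.some 0)) (hgbody.comp Primrec.pred.to_comp)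
  exact Partrec.nat_iff.1 this

lemma tdop_succ (h : Learner) (T : Text) (n : ℕ) :
    Tdop h T (n + 1) = (h (Encodable.encode (T n))).bind fun v =>
      match v with
      | 0 => Tdop h T n
      | e + 1 => Part.some e := rfl

/-- The generic sufficient criterion for transductive learning of a language. -/
lemma learns_of {h : Learner} {L : Set ℕ} {E d : ℕ} (hE : CIndex E) (hEL : Cset E = L)
    (hzero : h 0 = Part.some 0)
    (hvals : ∀ x ∈ L, h (x + 1) = Part.some 0 ∨ h (x + 1) = Part.some (E + 1))
    (hd : d ∈ L) (hdec : h (d + 1) = Part.some (E + 1)) :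
    Learns Tdop (andRes CIndRes ExC) h L := by
  intro T hT
  have hTn : ∀ n, h (Encodable.encode (T n)) = Part.some 0 ∨
      h (Encodable.encode (T n)) = Part.some (E + 1) := by
    intro n
    cases hTn : T n with
    | none =>
      left
      rw [Encodable.encode_none]
      exact hzero
    | some x =>
      have hx : x ∈ L := by rw [← hT]; exact ⟨n, hTn⟩
      have henc : Encodable.encode (some x) = x + 1 := by
        rw [Encodable.encode_some, Encodable.encode_nat]
      rw [henc]
      exact hvals x hx
  have key : ∀ n, Tdop h T n = Part.none ∨ Tdop h T n = Part.some E := by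
    intro n
    induction n with
    | zero => left; rfl
    | succ n ih =>
      rcases hTn n with h0 | h1
      · rw [tdop_succ, h0, Part.bind_some]; exact ih
      · rw [tdop_succ, h1, Part.bind_some]; right; rfl
  obtain ⟨m, hm⟩ : ∃ m, T m = some d := by
    have : d ∈ content T := by rw [hT]; exact hd
    exact this
  have hbase : Tdop h T (m + 1) = Part.some E := by
    rw [tdop_succ, hm]
    have henc : Encodable.encode (some d) = d + 1 := by
      rw [Encodable.encode_some, Encodable.encode_nat]
    rw [henc, hdec, Part.bind_some]
  have hstab : ∀ n, m + 1 ≤ n → Tdop h T n = Part.some E := by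
    intro n hn
    induction n with
    | zero => omega
    | succ k ih =>
      rcases Nat.lt_or_ge k (m + 1) with hk | hk
      · have : k = m := by omega
        rw [this]; exact hbase
      · rcases hTn k with h0 | h1
        · rw [tdop_succ, h0, Part.bind_some]; exact ih hk
        · rw [tdop_succ, h1, Part.bind_some]
  constructor
  · -- CIndRes
    intro i e' hie
    rcases key i with h0 | h1
    · rw [h0] at hie; exact absurd hie (Part.none_ne_some _)
    · rw [h1] at hie
      rw [← Part.some_inj.1 hie]
      exact hE
  · -- ExC
    refine ⟨m + 1, fun n hn => ?_, E, hstab (m + 1) le_rfl, hE, hEL.trans hT.symm⟩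
    rw [hstab n hn, hstab (m + 1) le_rfl]

/-- The partial learner `glearn` learns every diagonal language. -/
lemma glearn_learns {e : ℕ} (hdom : (probe e).Dom) :
    Learns Tdop (andRes CIndRes ExC) glearn (Lset e) := by
  have hp : probe e = Part.some ((probe e).get hdom) := (Part.some_get hdom).symm
  cases hα : (probe e).get hdom with
  | zero =>
    rw [hα] at hp
    have hL : Lset e = {dat e 0 0} := Lset_singleton hp
    rw [hL]
    refine learns_of (pIdx_cindex (dat e 0 0) (dat e 0 0)) (pIdx_cset_single _)
      glearn_pause ?_ (Set.mem_singleton _) ?_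
    · intro x hx
      rw [Set.mem_singleton_iff] at hx
      subst hx
      right
      rw [glearn_row0 0 hp, if_pos rfl]
    · rw [glearn_row0 0 hp, if_pos rfl]
  | succ c =>
    rw [hα] at hp
    have hL2 : Lset e = {dat e 0 0, Lsnd e} := Lset_pair hp
    have hval_y : glearn (dat e 0 0 + 1) = Part.some 0 := by
      rw [glearn_row0 0 hp, if_neg (Nat.succ_ne_zero c)]
    by_cases hsd : (srch e c).Dom
    · have hs : srch e c = Part.some ((srch e c).get hsd) := (Part.some_get hsd).symm
      set m := (srch e c).get hsd with hmdef
      by_cases hv : sval e c m = 1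
      · have hz : Lsnd e = dat e 1 (m.unpair.1 + 1) := Lsnd_found_one hp hs hv
        have hval_z : glearn (dat e 1 (m.unpair.1 + 1) + 1) =
            Part.some (pIdx (dat e 0 0) (dat e 1 (m.unpair.1 + 1)) + 1) := by
          rw [glearn_row1 (m.unpair.1 + 1) hp hs, if_pos (Or.inl ⟨hv, rfl⟩)]
        rw [hL2, hz]
        refine learns_of (pIdx_cindex _ _) (pIdx_cset _ _) glearn_pause ?_
          (Set.mem_insert_iff.2 (Or.inr (Set.mem_singleton _))) hval_z
        intro x hx
        rcases hx with rfl | hx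
        · left; exact hval_y
        · rw [Set.mem_singleton_iff] at hx
          subst hx
          right
          exact hval_z
      · have hz : Lsnd e = dat e 1 m.unpair.1 := Lsnd_found_ne hp hs hv
        have hval_z : glearn (dat e 1 m.unpair.1 + 1) =
            Part.some (pIdx (dat e 0 0) (dat e 1 m.unpair.1) + 1) := by
          rw [glearn_row1 m.unpair.1 hp hs, if_pos (Or.inr ⟨hv, rfl⟩)]
        rw [hL2, hz]
        refine learns_of (pIdx_cindex _ _) (pIdx_cset _ _) glearn_pause ?_
          (Set.mem_insert_iff.2 (Or.inr (Set.mem_singleton _))) hval_z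
        intro x hx
        rcases hx with rfl | hx
        · left; exact hval_y
        · rw [Set.mem_singleton_iff] at hx
          subst hx
          right
          exact hval_z
    · have hz : Lsnd e = dat e 2 0 := Lsnd_unfound hp hsd
      have hval_z : glearn (dat e 2 0 + 1) =
          Part.some (pIdx (dat e 0 0) (dat e 2 0) + 1) := by
        rw [glearn_row2 hp, if_neg (Nat.succ_ne_zero c)]
      rw [hL2, hz]
      refine learns_of (pIdx_cindex _ _) (pIdx_cset _ _) glearn_pause ?_
        (Set.mem_insert_iff.2 (Or.inr (Set.mem_singleton _))) hval_z
      intro x hx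
      rcases hx with rfl | hx
      · left; exact hval_y
      · rw [Set.mem_singleton_iff] at hx
        subst hx
        right
        exact hval_z

/-- The separating class of (recursive, in fact finite) languages. -/
def Ldiag : Set (Set ℕ) := {L | ∃ e, (probe e).Dom ∧ L = Lset e}

lemma recLang_pair (u v : ℕ) : RecLang {u, v} :=
  ⟨fun x => decide (x = u ∨ x = v),
    (PrimrecPred.or (Primrec.eq.comp Primrec.id (Primrec.const u))
      (Primrec.eq.comp Primrec.id (Primrec.const v))).decide.to_comp,
    fun x => by simp⟩

lemma recLang_single (u : ℕ) : RecLang {u} :=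
  ⟨fun x => decide (x = u),
    (Primrec.eq.comp Primrec.id (Primrec.const u)).decide.to_comp,
    fun x => by simp⟩

lemma Ldiag_rec : IsRecClass Ldiag := by
  rintro L ⟨e, hdom, rfl⟩
  have hp : probe e = Part.some ((probe e).get hdom) := (Part.some_get hdom).symm
  cases hα : (probe e).get hdom with
  | zero =>
    rw [hα] at hp
    rw [Lset_singleton hp]
    exact recLang_single _
  | succ c =>
    rw [hα] at hp
    rw [Lset_pair hp]
    exact recLang_pair _ _

lemma Ldiag_mem_part : Ldiag ∈ LearnableREC PartComputable Tdop (andRes CIndRes ExC) := by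
  refine ⟨Ldiag_rec, glearn, glearn_partrec, ?_⟩
  rintro L ⟨e, hdom, rfl⟩
  exact glearn_learns hdom

lemma Ldiag_not_total :
    Ldiag ∉ LearnableREC TotalComputable Tdop (andRes CIndRes ExC) := by
  rintro ⟨-, h, ⟨hpc, htot⟩, hlearn⟩
  obtain ⟨ch, hch⟩ := exists_code.1 hpc
  set e := Encodable.encode ch with he
  have hphi : phi e = h := by rw [phi, he, Denumerable.ofNat_encode, hch]
  have hdom : (probe e).Dom := by rw [probe, hphi]; exact htot _
  have hp : probe e = Part.some ((probe e).get hdom) := (Part.some_get hdom).symm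
  have hlearns := hlearn _ (⟨e, hdom, rfl⟩ : Lset e ∈ Ldiag)
  have hhy : h (dat e 0 0 + 1) = Part.some ((probe e).get hdom) := by
    rw [← hphi]; exact hp
  cases hα : (probe e).get hdom with
  | zero =>
    rw [hα] at hp hhy
    -- the text constantly equal to the single element
    have hcT : content (fun _ => some (dat e 0 0) : Text) = Lset e := by
      rw [Lset_singleton hp]
      ext x
      constructor
      · rintro ⟨n, hn⟩
        rw [Option.some_inj] at hn
        exact hn ▸ rfl
      · rintro rfl
        exact ⟨0, rfl⟩
    have hnone : ∀ n, Tdop h (fun _ => some (dat e 0 0)) n = Part.none := by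
      intro n
      induction n with
      | zero => rfl
      | succ k ih =>
        rw [tdop_succ]
        have henc : Encodable.encode (some (dat e 0 0)) = dat e 0 0 + 1 := by
          rw [Encodable.encode_some, Encodable.encode_nat]
        rw [henc, hhy, Part.bind_some]
        exact ih
    obtain ⟨-, n₀, -, e', he', -⟩ := hlearns _ hcT
    rw [hnone n₀] at he'
    exact absurd he' (Part.none_ne_some _)
  | succ c =>
    rw [hα] at hp hhy
    have hL2 : Lset e = {dat e 0 0, Lsnd e} := Lset_pair hp
    -- the text alternating between the two elements
    set T : Text := fun n => if n % 2 = 0 then some (dat e 0 0) else some (Lsnd e) with hTdef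
    have hcT : content T = Lset e := by
      rw [hL2]
      ext x
      constructor
      · rintro ⟨n, hn⟩
        by_cases hpar : n % 2 = 0
        · simp only [hTdef, hpar, if_true, Option.some_inj] at hn
          exact Or.inl hn.symm
        · simp only [hTdef, hpar, if_false, Option.some_inj] at hn
          exact Or.inr (Set.mem_singleton_iff.2 hn.symm)
      · rintro (rfl | hx)
        · exact ⟨0, by norm_num [hTdef]⟩
        · rw [Set.mem_singleton_iff] at hx
          subst hx
          exact ⟨1, by norm_num [hTdef]⟩
    obtain ⟨-, hex⟩ := hlearns T hcT
    obtain ⟨n₀, hstab, e', he', hCI, hCs⟩ := hex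
    have hT2n : T (2 * n₀) = some (dat e 0 0) := by
      rw [hTdef]
      simp [Nat.mul_mod_right]
    have hp1 : Tdop h T (2 * n₀ + 1) = Part.some c := by
      rw [tdop_succ, hT2n]
      have henc : Encodable.encode (some (dat e 0 0)) = dat e 0 0 + 1 := by
        rw [Encodable.encode_some, Encodable.encode_nat]
      rw [henc, hhy, Part.bind_some]
    have hec : e' = c := by
      have hst := hstab (2 * n₀ + 1) (by omega)
      rw [hp1, he'] at hst
      exact (Part.some_inj.1 hst).symm
    rw [hec] at hCI hCs
    rw [hcT, hL2] at hCs
    by_cases hsd : (srch e c).Dom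
    · have hs : srch e c = Part.some ((srch e c).get hsd) := (Part.some_get hsd).symm
      set m := (srch e c).get hsd with hmdef
      have hfound := srch_found hs
      by_cases hv : sval e c m = 1
      · have hz : Lsnd e = dat e 1 (m.unpair.1 + 1) := Lsnd_found_one hp hs hv
        have hmem : dat e 1 m.unpair.1 ∈ Cset c := by
          show phi c (dat e 1 m.unpair.1) = Part.some 1
          rw [hfound, hv]
        rw [hCs, hz] at hmem
        rcases hmem with hmem | hmem
        · obtain ⟨-, h2, -⟩ := dat_inj hmem
          exact absurd h2 one_ne_zero
        · rw [Set.mem_singleton_iff] at hmem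
          obtain ⟨-, -, h3⟩ := dat_inj hmem
          omega
      · have hz : Lsnd e = dat e 1 m.unpair.1 := Lsnd_found_ne hp hs hv
        have hmem : Lsnd e ∈ Cset c := by
          rw [hCs]
          exact Or.inr (Set.mem_singleton _)
        have : phi c (Lsnd e) = Part.some 1 := hmem
        rw [hz, hfound] at this
        exact hv (Part.some_inj.1 this)
    · exact hsd (srch_dom_of_cindex hCI)

end Separation

/-- `[ℛTxtTdCIndEx_C]_REC ⊊ [TxtTdCIndEx_C]_REC`. -/
theorem total_td_cind_ssubset :
    LearnableREC TotalComputable Tdop (andRes CIndRes ExC) ⊂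
      LearnableREC PartComputable Tdop (andRes CIndRes ExC) := by
  rw [ssubset_iff_subset_not_subset]
  constructor
  · rintro ℒ ⟨hrec, h, ⟨hpc, -⟩, hl⟩
    exact ⟨hrec, h, hpc, hl⟩
  · intro hsub
    exact Ldiag_not_total (hsub Ldiag_mem_part)

end InductiveInference
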